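/- Let W be an N×N real matrix, let ν be a norm on ℝ^N with induced operator norm ν_op, let α > 0 be such that κ := α·ν_op(Wᵀ) < 1, and let γ > 0 be a constant such that the Euclidean norm satisfies ‖v‖ ≤ γ·ν(v) for all v ∈ ℝ^N. Let z ∈ ℝ^N and define c(t+1) = α Wᵀ c(t) + z with arbitrary c(0), and let ρ_α = (I_N − α Wᵀ)⁻¹ z. Then for every t ≥ 0 the Euclidean estimation error satisfies ‖c(t) − ρ_α‖ ≤ γ · ((2 − κ)·κᵗ/(1 − κ)) · max(ν(c(0)), ν(z)). -/
import Mathlib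


/-- The Euclidean norm of a vector in `ℝ^N`. -/
noncomputable def eNorm {N : ℕ} (v : Fin N → ℝ) : ℝ :=
  Real.sqrt (∑ i, v i ^ 2)

/-- Error bound for the distributed α-centrality estimation: if `ν` is a norm
on `ℝ^N` with induced operator norm `νop`, `κ = α·νop(Wᵀ) < 1`, and `γ > 0` is
such that the Euclidean norm satisfies `‖v‖ ≤ γ·ν(v)` for every `v`, then the
iterates `c(t+1) = α Wᵀ c(t) + z` satisfy, for every `t`,
`‖c(t) − ρ_α‖ ≤ γ·((2 − κ)·κᵗ/(1 − κ))·max(ν(c 0), ν z)`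
where `ρ_α = (I − α Wᵀ)⁻¹ z`. -/
theorem alpha_centrality_error_bound
    {N : ℕ} (W : Matrix (Fin N) (Fin N) ℝ)
    (ν : (Fin N → ℝ) → ℝ)
    (hν_pos : ∀ v, v ≠ 0 → 0 < ν v)
    (hν_zero : ν 0 = 0)
    (hν_add : ∀ u v, ν (u + v) ≤ ν u + ν v)
    (hν_smul : ∀ (a : ℝ) (v : Fin N → ℝ), ν (a • v) = |a| * ν v)
    (νop : Matrix (Fin N) (Fin N) ℝ → ℝ)
    (hνop : ∀ A : Matrix (Fin N) (Fin N) ℝ,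
      νop A = sSup {r : ℝ | ∃ v : Fin N → ℝ, ν v ≤ 1 ∧ r = ν (A.mulVec v)})
    (α : ℝ) (hα : 0 < α)
    (κ : ℝ) (hκdef : κ = α * νop W.transpose) (hκ : κ < 1)
    (γ : ℝ) (hγ : 0 < γ)
    (hγν : ∀ v : Fin N → ℝ, eNorm v ≤ γ * ν v)
    (z : Fin N → ℝ) (c : ℕ → Fin N → ℝ)
    (hc : ∀ t, c (t + 1) = α • (W.transpose.mulVec (c t)) + z) :
    ∀ t, eNorm (c t - (1 - α • W.transpose)⁻¹.mulVec z)
      ≤ γ * ((2 - κ) * κ ^ t / (1 - κ)) * max (ν (c 0)) (ν z) := by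
  set A := W.transpose with hA
  -- nonnegativity of ν
  have hν_nonneg : ∀ v, 0 ≤ ν v := by
    intro v
    rcases eq_or_ne v 0 with h | h
    · simp [h, hν_zero]
    · exact (hν_pos v h).le
  -- triangle inequality for finite sums
  have hν_sum : ∀ (s : Finset (Fin N)) (f : Fin N → Fin N → ℝ),
      ν (∑ i ∈ s, f i) ≤ ∑ i ∈ s, ν (f i) := by
    intro s f
    induction s using Finset.cons_induction with
    | empty => simp [hν_zero]
    | cons i s hi ih =>
        rw [Finset.sum_cons, Finset.sum_cons]
        exact le_trans (hν_add _ _) (by linarith [ih])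
  -- coordinates bounded by γ·ν
  have hcoord : ∀ (v : Fin N → ℝ) (i : Fin N), |v i| ≤ γ * ν v := by
    intro v i
    refine le_trans ?_ (hγν v)
    rw [eNorm, ← Real.sqrt_sq_eq_abs]
    exact Real.sqrt_le_sqrt (Finset.single_le_sum (fun j _ => sq_nonneg (v j)) (Finset.mem_univ i))
  -- decomposition of mulVec
  have hdecomp : ∀ v : Fin N → ℝ,
      A.mulVec v = ∑ i, v i • (fun j => A j i) := by
    intro v
    funext j
    simp [Matrix.mulVec, dotProduct, Finset.sum_apply, mul_comm]
  -- the set defining νop is bounded above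
  set S : Set ℝ := {r : ℝ | ∃ v : Fin N → ℝ, ν v ≤ 1 ∧ r = ν (A.mulVec v)} with hS
  have hbdd : BddAbove S := by
    refine ⟨∑ i, γ * ν (fun j => A j i), ?_⟩
    rintro r ⟨v, hv1, rfl⟩
    rw [hdecomp]
    refine le_trans (hν_sum _ _) (Finset.sum_le_sum fun i _ => ?_)
    rw [hν_smul]
    have h1 : |v i| ≤ γ := le_trans (hcoord v i)
      (by nlinarith [hν_nonneg v])
    exact mul_le_mul_of_nonneg_right h1 (hν_nonneg _) |>.trans_eq rfl
  have h0S : (0 : ℝ) ∈ S := ⟨0, by simp [hν_zero], by simp [hν_zero]⟩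
  have hop_nonneg : 0 ≤ νop A := by
    rw [hνop]
    exact le_csSup hbdd h0S
  have hκ0 : 0 ≤ κ := by
    rw [hκdef]; positivity
  -- operator norm bound
  have hop : ∀ v : Fin N → ℝ, ν (A.mulVec v) ≤ νop A * ν v := by
    intro v
    rcases eq_or_ne v 0 with rfl | hv
    · simp [Matrix.mulVec_zero, hν_zero]
    · have hpos := hν_pos v hv
      have hmem : ν (A.mulVec ((ν v)⁻¹ • v)) ∈ S := by
        refine ⟨(ν v)⁻¹ • v, ?_, rfl⟩
        rw [hν_smul, abs_of_pos (inv_pos.mpr hpos), inv_mul_cancel₀ hpos.ne']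
      have hle : ν (A.mulVec ((ν v)⁻¹ • v)) ≤ νop A := by
        rw [hνop]; exact le_csSup hbdd hmem
      rw [Matrix.mulVec_smul, hν_smul, abs_of_pos (inv_pos.mpr hpos)] at hle
      calc ν (A.mulVec v) = ((ν v)⁻¹ * ν (A.mulVec v)) * ν v := by
            field_simp
        _ ≤ νop A * ν v := mul_le_mul_of_nonneg_right hle hpos.le
  have hAbound : ∀ v : Fin N → ℝ, ν (α • A.mulVec v) ≤ κ * ν v := by
    intro v
    rw [hν_smul, abs_of_pos hα, hκdef, mul_assoc]
    exact mul_le_mul_of_nonneg_left (hop v) hα.le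
  -- invertibility of B = 1 - α • A
  set B : Matrix (Fin N) (Fin N) ℝ := 1 - α • A with hB
  have hBmul : ∀ v : Fin N → ℝ, B.mulVec v = v - α • A.mulVec v := by
    intro v
    rw [hB, Matrix.sub_mulVec, Matrix.one_mulVec, Matrix.smul_mulVec]
  have hdet : B.det ≠ 0 := by
    intro hd
    obtain ⟨v, hv, hv0⟩ := (Matrix.exists_mulVec_eq_zero_iff).mpr hd
    rw [hBmul, sub_eq_zero] at hv0
    have h1 : ν v ≤ κ * ν v := by
      conv_lhs => rw [hv0]
      exact hAbound v
    have h2 := hν_pos v hv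
    nlinarith
  set ρ : Fin N → ℝ := B⁻¹.mulVec z with hρ
  have hBρ : B.mulVec ρ = z := by
    rw [hρ, Matrix.mulVec_mulVec, Matrix.mul_nonsing_inv _ (isUnit_iff_ne_zero.mpr hdet),
      Matrix.one_mulVec]
  have hfix : ρ = α • A.mulVec ρ + z := by
    have h := hBρ
    rw [hBmul] at h
    funext i
    have h2 := congrFun h i
    simp only [Pi.sub_apply, Pi.add_apply, Pi.smul_apply, smul_eq_mul] at h2 ⊢
    linarith
  -- error recursion
  have herr : ∀ t, c (t + 1) - ρ = α • A.mulVec (c t - ρ) := by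
    intro t
    rw [hc t]
    conv_lhs => rw [hfix]
    rw [Matrix.mulVec_sub, smul_sub]
    abel
  have hiter : ∀ t, ν (c t - ρ) ≤ κ ^ t * ν (c 0 - ρ) := by
    intro t
    induction t with
    | zero => simp
    | succ t ih =>
        rw [herr t]
        calc ν (α • A.mulVec (c t - ρ)) ≤ κ * ν (c t - ρ) := hAbound _
          _ ≤ κ * (κ ^ t * ν (c 0 - ρ)) := mul_le_mul_of_nonneg_left ih hκ0
          _ = κ ^ (t + 1) * ν (c 0 - ρ) := by ring
  -- bound on ν ρ
  have hνρ : (1 - κ) * ν ρ ≤ ν z := by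
    have h1 : ν ρ ≤ κ * ν ρ + ν z := by
      conv_lhs => rw [hfix]
      exact le_trans (hν_add _ _) (by linarith [hAbound ρ])
    linarith
  have hκ1 : (0:ℝ) < 1 - κ := by linarith
  -- bound on initial error
  have hinit : ν (c 0 - ρ) ≤ ν (c 0) + ν ρ := by
    have : c 0 - ρ = c 0 + (-1 : ℝ) • ρ := by funext i; simp [sub_eq_add_neg]
    rw [this]
    refine le_trans (hν_add _ _) ?_
    rw [hν_smul]; simp
  intro t
  set M := max (ν (c 0)) (ν z) with hM
  have hM0 : 0 ≤ M := le_trans (hν_nonneg (c 0)) (le_max_left _ _)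
  have hc0M : ν (c 0) ≤ M := le_max_left _ _
  have hzM : ν z ≤ M := le_max_right _ _
  have hρM : ν ρ ≤ M / (1 - κ) := by
    rw [le_div_iff₀ hκ1]; nlinarith
  have hν0 : ν (c 0 - ρ) ≤ (2 - κ) / (1 - κ) * M := by
    have : M + M / (1 - κ) = (2 - κ) / (1 - κ) * M := by field_simp; ring
    nlinarith [hinit]
  have hfinal : ν (c t - ρ) ≤ (2 - κ) * κ ^ t / (1 - κ) * M := by
    calc ν (c t - ρ) ≤ κ ^ t * ν (c 0 - ρ) := hiter t
      _ ≤ κ ^ t * ((2 - κ) / (1 - κ) * M) :=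
          mul_le_mul_of_nonneg_left hν0 (pow_nonneg hκ0 t)
      _ = (2 - κ) * κ ^ t / (1 - κ) * M := by ring
  calc eNorm (c t - ρ) ≤ γ * ν (c t - ρ) := hγν _
    _ ≤ γ * ((2 - κ) * κ ^ t / (1 - κ) * M) := mul_le_mul_of_nonneg_left hfinal hγ.le
    _ = γ * ((2 - κ) * κ ^ t / (1 - κ)) * M := by ring
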